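/- arXiv:1306.1645 — 5 statements merged into one kernel-verified Lean document; each statement's English description precedes it below -/
import Mathlib

section
/- If $0 < \prod_{i=1}^{g+1} V_i < \prod_{i=1}^{g+1} I_i$ with all $I_i, V_i > 0$, then the explicit evolution formula $\bar I_i = V_i + I_i \cdot \frac{1 - \prod_j V_j / \prod_j I_j}{1 + \frac{V_{i-1}}{I_{i-1}} + \frac{V_{i-1}V_{i-2}}{I_{i-1}I_{i-2}} + \cdots + \frac{V_{i-1}\cdots V_{i+1}}{I_{i-1}\cdots I_{i+1}}}$, $\bar V_i = I_{i+1} V_i / \bar I_i$ (indices mod $g+1$) satisfies the periodic discrete Toda lattice equations $\bar I_i + \bar V_{i-1} = I_i + V_i$ and $\bar V_i \bar I_i = I_{i+1} V_i$ for all $i$. -/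
open Finset
open Fin.NatCast

lemma my_shift (g : ℕ) (r : Fin (g+1) → ℝ) (i : Fin (g+1)) (k : ℕ) :
    r (i - 1) * ∏ l ∈ Finset.Icc 1 k, r (i - 1 - (l : Fin (g+1)))
      = ∏ l ∈ Finset.Icc 1 (k+1), r (i - (l : Fin (g+1))) := by
  induction k with
  | zero => simp
  | succ k ih =>
    rw [Finset.prod_Icc_succ_top (by omega), Finset.prod_Icc_succ_top (by omega),
      ← mul_assoc, ih]
    congr 1
    push_cast
    open Fin.CommRing in ring

lemma my_full (g : ℕ) (r : Fin (g+1) → ℝ) (c : Fin (g+1)) :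
    ∏ l ∈ Finset.Icc 1 (g+1), r (c - (l : Fin (g+1))) = ∏ j, r j := by
  rw [← Finset.Ico_add_one_right_eq_Icc, Finset.prod_Ico_eq_prod_range]
  have h : g + 1 + 1 - 1 = g + 1 := by omega
  rw [h, ← Fin.prod_univ_eq_prod_range (fun j => r (c - ((1 + j : ℕ) : Fin (g+1)))) (g+1)]
  have h2 : ∀ j : Fin (g+1), c - ((1 + (j : ℕ) : ℕ) : Fin (g+1)) = (c - 1) - j := by
    intro j
    push_cast [Fin.cast_val_eq_self]
    open Fin.CommRing in ring
  simp_rw [h2]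
  exact (Equiv.subLeft (c-1)).prod_comp r

/-- the explicit evolution formula of the periodic discrete Toda lattice
satisfies the pdTL equations. Indices are taken in `Fin (g+1)` (i.e. modulo `g+1`). -/
theorem pdTL_explicit_formula_satisfies_equations
    (g : ℕ) (hg : 1 ≤ g) (I V : Fin (g + 1) → ℝ)
    (hI : ∀ i, 0 < I i) (hV : ∀ i, 0 < V i)
    (hprodpos : 0 < ∏ i, V i)
    (hlt : ∏ i, V i < ∏ i, I i)
    (Ibar Vbar : Fin (g + 1) → ℝ)
    (hIbar : ∀ i : Fin (g + 1), Ibar i =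
      V i + I i * (1 - (∏ j, V j) / (∏ j, I j)) /
        (∑ k ∈ Finset.range (g + 1), ∏ l ∈ Finset.Icc 1 k,
          V (i - (l : Fin (g + 1))) / I (i - (l : Fin (g + 1)))))
    (hVbar : ∀ i : Fin (g + 1), Vbar i = I (i + 1) * V i / Ibar i) :
    (∀ i : Fin (g + 1), Ibar i + Vbar (i - 1) = I i + V i) ∧
    (∀ i : Fin (g + 1), Vbar i * Ibar i = I (i + 1) * V i) := by
  have hIprod : 0 < ∏ i, I i := Finset.prod_pos (fun i _ => hI i)
  set r : Fin (g+1) → ℝ := fun j => V j / I j with hrdef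
  have hrpos : ∀ j, 0 < r j := fun j => div_pos (hV j) (hI j)
  set P : ℝ := (∏ j, V j) / (∏ j, I j) with hPdef
  have hP0 : 0 < P := div_pos hprodpos hIprod
  have hP1 : P < 1 := (div_lt_one hIprod).mpr hlt
  have hPr : ∏ j, r j = P := by
    rw [hPdef, hrdef]
    exact Finset.prod_div_distrib _ _
  set D : Fin (g+1) → ℝ := fun i => ∑ k ∈ Finset.range (g + 1),
      ∏ l ∈ Finset.Icc 1 k, r (i - (l : Fin (g + 1))) with hDdef
  have hDpos : ∀ i, 0 < D i := by
    intro i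
    apply Finset.sum_pos
    · intro k _
      exact Finset.prod_pos (fun l _ => hrpos _)
    · exact Finset.nonempty_range_iff.mpr (by omega)
  have hIbar' : ∀ i, Ibar i = V i + I i * (1 - P) / D i := fun i => hIbar i
  have hkey : ∀ i, D i = r (i - 1) * D (i - 1) + (1 - P) := by
    intro i
    have h1 : r (i - 1) * D (i - 1)
        = ∑ k ∈ Finset.range (g + 1), ∏ l ∈ Finset.Icc 1 (k+1), r (i - (l : Fin (g+1))) := by
      rw [hDdef, Finset.mul_sum]
      exact Finset.sum_congr rfl (fun k _ => my_shift g r i k)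
    have h2 : ∑ k ∈ Finset.range (g + 2), ∏ l ∈ Finset.Icc 1 k, r (i - (l : Fin (g+1)))
        = D i + ∏ l ∈ Finset.Icc 1 (g+1), r (i - (l : Fin (g+1))) :=
      Finset.sum_range_succ _ _
    have h3 : ∑ k ∈ Finset.range (g + 2), ∏ l ∈ Finset.Icc 1 k, r (i - (l : Fin (g+1)))
        = (∑ k ∈ Finset.range (g + 1), ∏ l ∈ Finset.Icc 1 (k+1), r (i - (l : Fin (g+1)))) + 1 := by
      rw [Finset.sum_range_succ' (fun k => ∏ l ∈ Finset.Icc 1 k, r (i - (l : Fin (g+1)))) (g+1)]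
      simp
    rw [my_full g r i, hPr] at h2
    have h4 := h3.symm.trans h2
    rw [← h1] at h4
    linarith
  have hkey' : ∀ i, D i * I (i - 1) = V (i - 1) * D (i - 1) + (1 - P) * I (i - 1) := by
    intro i
    have hk := hkey i
    rw [hrdef] at hk
    have hI1 := (hI (i-1)).ne'
    linear_combination I (i - 1) * hk + D (i - 1) * (div_mul_cancel₀ (V (i-1)) hI1)
  clear_value P D
  clear hkey hPr hIbar hDdef
  have hIbarD : ∀ i, Ibar i = I i * D (i + 1) / D i := by
    intro i
    have hk := hkey' (i + 1)
    rw [show (i : Fin (g+1)) + 1 - 1 = i by open Fin.CommRing in ring] at hk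
    rw [hIbar' i]
    field_simp [(hDpos i).ne', (hI i).ne']
    linear_combination -hk
  have hIbarpos : ∀ i, 0 < Ibar i := by
    intro i
    rw [hIbarD i]
    exact div_pos (mul_pos (hI i) (hDpos _)) (hDpos i)
  constructor
  · intro i
    have hsub : (i : Fin (g+1)) - 1 + 1 = i := by open Fin.CommRing in ring
    rw [hIbar' i, hVbar (i-1), hIbarD (i-1), hsub]
    have hk := hkey' i
    have hI1 := (hI (i-1)).ne'
    have hIi := (hI i).ne'
    have hD1 := (hDpos (i-1)).ne'
    have hDi := (hDpos i).ne'
    field_simp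
    linear_combination (-(I i)) * hk
  · intro i
    rw [hVbar i, div_mul_cancel₀ _ (hIbarpos i).ne']
end

section
/- Each conserved quantity $c_{g+1-k}$ of the periodic discrete Toda lattice, defined as $c_{g+1-k} = \sum_{\Omega\subseteq\Lambda, |\Omega|=k} \det L_\Omega - I_1 V_1 \sum_{\Upsilon \subseteq \bar{\bar\Lambda}, |\Upsilon|=k-2} \det L_\Upsilon$ for $k=2,\ldots,g+1$ (and $c_g = \sum_{i=1}^{g+1}(I_i+V_i)$ for $k=1$), is a subtraction-free homogeneous polynomial in $I_1,\ldots,I_{g+1},V_1,\ldots,V_{g+1}$ of degree $k$; i.e., it can be written as a sum of monomials with nonnegative integer coefficients, each monomial of total degree $k$. -/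
open Finset Matrix MvPolynomial

/-- The discrete Toda molecule Lax matrix `L_Λ` (0-based indexing). -/
def LLam (g : ℕ) {R : Type*} [CommRing R] (I V : Fin (g + 1) → R) :
    Matrix (Fin (g + 1)) (Fin (g + 1)) R :=
  Matrix.of fun i j =>
    if (i : ℕ) = (j : ℕ) then I (i + 1) + V i
    else if (i : ℕ) + 1 = (j : ℕ) then 1
    else if (i : ℕ) = (j : ℕ) + 1 then I i * V i
    else 0

/-- The generic Lax matrix over the polynomial ring `ℤ[I_1,…,I_{g+1},V_1,…,V_{g+1}]`,
with `I i = X (inl i)` and `V i = X (inr i)`. -/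
noncomputable def LLamX (g : ℕ) :
    Matrix (Fin (g + 1)) (Fin (g + 1)) (MvPolynomial (Fin (g + 1) ⊕ Fin (g + 1)) ℤ) :=
  LLam g (fun i => X (Sum.inl i)) (fun i => X (Sum.inr i))

/-- The index set `\bar{\bar Λ} = {2,…,g}` (1-based), i.e. `{1,…,g-1}` (0-based). -/
def BBLam (g : ℕ) : Finset (Fin (g + 1)) :=
  (Finset.univ : Finset (Fin (g + 1))).filter (fun i => 1 ≤ (i : ℕ) ∧ (i : ℕ) ≤ g - 1)

/-- The conserved quantity `c_{g+1-k}` of the pdTL as a polynomial, for `k = 1,…,g+1`. -/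
noncomputable def pdTLconserved (g k : ℕ) :
    MvPolynomial (Fin (g + 1) ⊕ Fin (g + 1)) ℤ :=
  if k = 1 then ∑ i : Fin (g + 1), (X (Sum.inl i) + X (Sum.inr i))
  else
    (∑ Ω ∈ (Finset.univ : Finset (Fin (g + 1))).powersetCard k,
      ((LLamX g).submatrix (fun p : Ω => (p : Fin (g + 1)))
        (fun p : Ω => (p : Fin (g + 1)))).det)
    - X (Sum.inl 0) * X (Sum.inr 0) *
      (∑ Υ ∈ (BBLam g).powersetCard (k - 2),
        ((LLamX g).submatrix (fun p : Υ => (p : Fin (g + 1)))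
          (fun p : Υ => (p : Fin (g + 1)))).det)


section
variable (g : ℕ)

abbrev PP (g : ℕ) := MvPolynomial (Fin (g + 1) ⊕ Fin (g + 1)) ℤ

noncomputable def aP (i : Fin (g+1)) : PP g := X (Sum.inl (i+1)) + X (Sum.inr i)
noncomputable def cP (i : Fin (g+1)) : PP g := X (Sum.inl i) * X (Sum.inr i)

def pforce : Option (Fin (g+1)) → Fin (g+1) → Bool
  | none, _ => false
  | some i, j => (i : ℕ) + 1 == (j : ℕ)

noncomputable def SS : Option (Fin (g+1)) → List (Fin (g+1)) → PP g
  | _, [] => 1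
  | p, j :: l =>
      (if pforce g p j then 0 else X (Sum.inr j) * SS none l) + X (Sum.inl (j+1)) * SS (some j) l

noncomputable def AAx : Option (Fin (g+1)) → List (Fin (g+1)) → PP g
  | p, [] => if pforce g p (Fin.last g) then 0 else X (Sum.inr (Fin.last g))
  | p, j :: l =>
      (if pforce g p j then 0 else X (Sum.inr j) * AAx none l) + X (Sum.inl (j+1)) * AAx (some j) l

lemma SS_nil (p : Option (Fin (g+1))) : SS g p [] = 1 := rfl
lemma SS_cons (p : Option (Fin (g+1))) (j : Fin (g+1)) (l : List (Fin (g+1))) :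
    SS g p (j :: l) =
      (if pforce g p j then 0 else X (Sum.inr j) * SS g none l)
        + X (Sum.inl (j+1)) * SS g (some j) l := rfl
lemma AAx_nil (p : Option (Fin (g+1))) :
    AAx g p [] = if pforce g p (Fin.last g) then 0 else X (Sum.inr (Fin.last g)) := rfl
lemma AAx_cons (p : Option (Fin (g+1))) (j : Fin (g+1)) (l : List (Fin (g+1))) :
    AAx g p (j :: l) =
      (if pforce g p j then 0 else X (Sum.inr j) * AAx g none l)
        + X (Sum.inl (j+1)) * AAx g (some j) l := rfl

lemma pforce_none (j : Fin (g+1)) : pforce g none j = false := rfl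

lemma SS_append (l : List (Fin (g+1))) : ∀ p,
    SS g p (l ++ [Fin.last g]) = AAx g p l + X (Sum.inl 0) * SS g p l := by
  induction l with
  | nil =>
      intro p
      rw [List.nil_append, SS_cons, AAx_nil, Fin.last_add_one]
      simp only [SS_nil]
      by_cases h : pforce g p (Fin.last g) <;> simp [h] <;> ring
  | cons j l ih =>
      intro p
      rw [List.cons_append, SS_cons, ih none, ih (some j), AAx_cons, SS_cons]
      by_cases h : pforce g p j <;> simp only [h, if_true, if_false, Bool.false_eq_true] <;> ring

lemma SS_cons_cons (i j : Fin (g+1)) (l : List (Fin (g+1))) :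
    SS g none (i :: j :: l) =
      aP g i * SS g none (j :: l)
        - (if (i : ℕ) + 1 = (j : ℕ) then cP g j else 0) * SS g none l := by
  by_cases h : (i : ℕ) + 1 = (j : ℕ)
  · have hlt : i < Fin.last g := by
      rw [Fin.lt_def, Fin.val_last]
      have := j.isLt; omega
    have hij : i + 1 = j := Fin.ext (by rw [Fin.val_add_one_of_lt hlt]; exact h)
    have ha : aP g i = X (Sum.inl j) + X (Sum.inr i) := by rw [aP, hij]
    have hf : pforce g (some i) j = true := by simp [pforce, h]
    rw [SS_cons g none i, SS_cons g (some i) j, pforce_none, if_neg (by simp), hf, if_pos rfl,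
      if_pos h, hij, SS_cons g none j, pforce_none, if_neg (by simp), ha]
    simp only [cP]
    ring
  · have hf : pforce g (some i) j = false := by simp [pforce, h]
    rw [SS_cons g none i, SS_cons g (some i) j, pforce_none, if_neg (by simp), hf,
      if_neg (by simp), if_neg h, SS_cons g none j, pforce_none, if_neg (by simp)]
    simp only [aP]
    ring

section
variable (g : ℕ)

lemma LLamX_diag (i : Fin (g+1)) :
    LLamX g i i = X (Sum.inl (i+1)) + X (Sum.inr i) := by
  simp [LLamX, LLam]

lemma LLamX_of_far (i j : Fin (g+1)) (h1 : (i:ℕ) ≠ j) (h2 : (i:ℕ)+1 ≠ j) (h3 : (i:ℕ) ≠ (j:ℕ)+1) :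
    LLamX g i j = 0 := by
  simp [LLamX, LLam, h1, h2, h3]

lemma LLamX_super (i j : Fin (g+1)) (h : (i:ℕ)+1 = j) : LLamX g i j = 1 := by
  have : (i:ℕ) ≠ (j:ℕ) := by omega
  simp [LLamX, LLam, this, h]

lemma LLamX_sub (i j : Fin (g+1)) (h : (i:ℕ) = (j:ℕ)+1) :
    LLamX g i j = X (Sum.inl i) * X (Sum.inr i) := by
  have h1 : (i:ℕ) ≠ (j:ℕ) := by omega
  have h2 : (i:ℕ)+1 ≠ (j:ℕ) := by omega
  simp only [LLamX, LLam, Matrix.of_apply]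
  rw [if_neg h1, if_neg h2, if_pos h]

end

section
variable (g : ℕ)

lemma det_submatrix_SS :
    ∀ n, ∀ e : Fin n → Fin (g+1), StrictMono e →
      ((LLamX g).submatrix e e).det = SS g none (List.ofFn e) := by
  intro n
  induction n using Nat.strong_induction_on with
  | _ n IH =>
    intro e he
    match n with
    | 0 =>
        simp [Matrix.det_fin_zero, List.ofFn_zero, SS_nil]
    | 1 =>
        rw [Matrix.det_fin_one, List.ofFn_succ, List.ofFn_zero, SS_cons, pforce_none,
          if_neg (by simp), SS_nil, SS_nil, Matrix.submatrix_apply, LLamX_diag]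
        ring
    | (m+2) =>
        have h01 : (e 0 : ℕ) < (e 1 : ℕ) := he (by simp [Fin.lt_def])
        rw [Matrix.det_succ_row_zero, Fin.sum_univ_succ, Fin.sum_univ_succ]
        have htail : ∀ i : Fin m,
            ((LLamX g).submatrix e e) 0 i.succ.succ = 0 := by
          intro i
          have h1j : (e 1 : ℕ) < (e i.succ.succ : ℕ) := by
            apply he
            rw [Fin.lt_def]
            simp [Fin.val_succ]
          rw [Matrix.submatrix_apply]
          exact LLamX_of_far g _ _ (by omega) (by omega) (by omega)
        rw [Finset.sum_eq_zero (fun i _ => by rw [htail i]; ring)]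
        simp only [Fin.succ_zero_eq_one, Fin.val_zero, Fin.val_one, pow_zero, pow_one,
          add_zero, one_mul, neg_one_mul]
        -- j = 0 term
        have hz : (0 : Fin (m+2)).succAbove = Fin.succ := Fin.succAbove_zero
        have hsub0 : ((LLamX g).submatrix e e).submatrix Fin.succ ((0:Fin (m+2)).succAbove)
            = (LLamX g).submatrix (fun i : Fin (m+1) => e i.succ) (fun i : Fin (m+1) => e i.succ) := by
          rw [hz, Matrix.submatrix_submatrix]; rfl
        have ih1 := IH (m+1) (by omega) (fun i : Fin (m+1) => e i.succ)
          (he.comp Fin.strictMono_succ)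
        -- ofFn shape
        have hofn : List.ofFn e = e 0 :: e 1 :: List.ofFn (fun i : Fin m => e i.succ.succ) := by
          rw [List.ofFn_succ, List.ofFn_succ]
          rfl
        by_cases hadj : (e 0 : ℕ) + 1 = (e 1 : ℕ)
        · -- adjacent case
          have hA01 : ((LLamX g).submatrix e e) 0 1 = 1 := by
            rw [Matrix.submatrix_apply]; exact LLamX_super g _ _ hadj
          have hA00 : ((LLamX g).submatrix e e) 0 0 = X (Sum.inl (e 0 + 1)) + X (Sum.inr (e 0)) := by
            rw [Matrix.submatrix_apply]; exact LLamX_diag g _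
          -- the (0,1)-minor
          have hone : (1 : Fin (m+2)).succAbove 0 = 0 := Fin.one_succAbove_zero
          have hsucc2 : ∀ j : Fin m, (1 : Fin (m+2)).succAbove j.succ = j.succ.succ := by
            intro j
            have := Fin.succ_succAbove_succ (0 : Fin (m+1)) j
            simpa using this
          set B := ((LLamX g).submatrix e e).submatrix Fin.succ ((1:Fin (m+2)).succAbove) with hB
          have hBapp : ∀ i j, B i j = LLamX g (e i.succ) (e ((1:Fin (m+2)).succAbove j)) := by
            intro i j; rw [hB]; simp [Matrix.submatrix_apply]
          have hB00 : B 0 0 = X (Sum.inl (e 1)) * X (Sum.inr (e 1)) := by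
            rw [hBapp, hone, Fin.succ_zero_eq_one]
            exact LLamX_sub g _ _ (by omega)
          have hBtail : ∀ i : Fin m, B i.succ 0 = 0 := by
            intro i
            have h1j : (e 1 : ℕ) < (e i.succ.succ : ℕ) := by
              apply he; rw [Fin.lt_def]; simp [Fin.val_succ]
            rw [hBapp, hone]
            exact LLamX_of_far g _ _ (by omega) (by omega) (by omega)
          have hBsub : B.submatrix ((0:Fin (m+1)).succAbove) Fin.succ
              = (LLamX g).submatrix (fun i : Fin m => e i.succ.succ) (fun i : Fin m => e i.succ.succ) := by
            rw [hB]
            ext i j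
            simp [Matrix.submatrix_apply, Fin.succAbove_zero, hsucc2 j]
          have ih2 := IH m (by omega) (fun i : Fin m => e i.succ.succ)
            (he.comp ((Fin.strictMono_succ).comp Fin.strictMono_succ))
          have hdetB : B.det = X (Sum.inl (e 1)) * X (Sum.inr (e 1)) *
              SS g none (List.ofFn (fun i : Fin m => e i.succ.succ)) := by
            rw [Matrix.det_succ_column_zero, Fin.sum_univ_succ,
              Finset.sum_eq_zero (fun i _ => by rw [hBtail i]; ring), hB00, hBsub, ih2]
            simp
          rw [hdetB, hA01, hA00, hsub0, ih1, hofn, SS_cons_cons, if_pos hadj]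
          have : List.ofFn (fun i : Fin (m+1) => e i.succ)
              = e 1 :: List.ofFn (fun i : Fin m => e i.succ.succ) := by
            rw [List.ofFn_succ]; rfl
          rw [this]
          simp only [aP, cP, Fin.val_zero, Fin.val_one, pow_zero, pow_one]
          ring
        · -- non-adjacent case
          have hA01 : ((LLamX g).submatrix e e) 0 1 = 0 := by
            rw [Matrix.submatrix_apply]
            exact LLamX_of_far g _ _ (by omega) (by omega) (by omega)
          have hA00 : ((LLamX g).submatrix e e) 0 0 = X (Sum.inl (e 0 + 1)) + X (Sum.inr (e 0)) := by
            rw [Matrix.submatrix_apply]; exact LLamX_diag g _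
          rw [hA01, hA00, hsub0, ih1, hofn, SS_cons_cons, if_neg hadj]
          have : List.ofFn (fun i : Fin (m+1) => e i.succ)
              = e 1 :: List.ofFn (fun i : Fin m => e i.succ.succ) := by
            rw [List.ofFn_succ]; rfl
          rw [this]
          simp only [aP, Fin.val_zero, pow_zero]
          ring

end

section
variable (g : ℕ)

lemma det_subtype (Ω : Finset (Fin (g+1))) (l : List (Fin (g+1))) (hs : l.Pairwise (·<·))
    (hmem : ∀ x, x ∈ l ↔ x ∈ Ω) :
    ((LLamX g).submatrix (fun p : Ω => (p : Fin (g+1))) (fun p : Ω => (p : Fin (g+1)))).det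
      = SS g none l := by
  have he : StrictMono l.get := fun a b hab => hs.rel_get_of_lt hab
  have hbij : Function.Bijective
      (fun i : Fin l.length => (⟨l.get i, (hmem _).1 (List.get_mem l i)⟩ : Ω)) := by
    constructor
    · intro a b hab
      exact he.injective (congrArg Subtype.val hab)
    · rintro ⟨x, hx⟩
      obtain ⟨i, hi⟩ := List.get_of_mem ((hmem x).2 hx)
      exact ⟨i, Subtype.ext hi⟩
  let φ : Fin l.length ≃ Ω := Equiv.ofBijective _ hbij
  rw [← Matrix.det_submatrix_equiv_self φ, Matrix.submatrix_submatrix]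
  have hφ : ((fun p : Ω => (p : Fin (g+1))) ∘ φ) = l.get := rfl
  rw [hφ, det_submatrix_SS g _ l.get he, List.ofFn_get]

end

section
variable (g : ℕ)

def NNc (q : MvPolynomial (Fin (g + 1) ⊕ Fin (g + 1)) ℤ) : Prop :=
  ∀ d, 0 ≤ q.coeff d

lemma NNc_zero : NNc g 0 := fun d => by simp
lemma NNc_one : NNc g 1 := fun d => by
  rw [MvPolynomial.coeff_one]
  split <;> norm_num
lemma NNc_X (s : Fin (g+1) ⊕ Fin (g+1)) : NNc g (X s) := fun d => by
  rw [MvPolynomial.coeff_X']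
  split <;> norm_num
lemma NNc_add {p q} (hp : NNc g p) (hq : NNc g q) : NNc g (p + q) := fun d => by
  rw [MvPolynomial.coeff_add]
  exact add_nonneg (hp d) (hq d)
lemma NNc_mul {p q} (hp : NNc g p) (hq : NNc g q) : NNc g (p * q) := fun d => by
  rw [MvPolynomial.coeff_mul]
  exact Finset.sum_nonneg fun x _ => mul_nonneg (hp _) (hq _)
lemma NNc_sum {α : Type*} (s : Finset α) (f : α → MvPolynomial (Fin (g + 1) ⊕ Fin (g + 1)) ℤ)
    (h : ∀ a ∈ s, NNc g (f a)) : NNc g (∑ a ∈ s, f a) := fun d => by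
  rw [MvPolynomial.coeff_sum]
  exact Finset.sum_nonneg fun a ha => h a ha d

lemma NNc_SS : ∀ (l : List (Fin (g+1))) (p), NNc g (SS g p l) := by
  intro l
  induction l with
  | nil => intro p; rw [SS_nil]; exact NNc_one g
  | cons j l ih =>
      intro p
      rw [SS_cons]
      apply NNc_add
      · split
        · exact NNc_zero g
        · exact NNc_mul g (NNc_X g _) (ih none)
      · exact NNc_mul g (NNc_X g _) (ih (some j))

lemma NNc_AAx : ∀ (l : List (Fin (g+1))) (p), NNc g (AAx g p l) := by
  intro l
  induction l with
  | nil =>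
      intro p
      rw [AAx_nil]
      split
      · exact NNc_zero g
      · exact NNc_X g _
  | cons j l ih =>
      intro p
      rw [AAx_cons]
      apply NNc_add
      · split
        · exact NNc_zero g
        · exact NNc_mul g (NNc_X g _) (ih none)
      · exact NNc_mul g (NNc_X g _) (ih (some j))

lemma SS_homog : ∀ (l : List (Fin (g+1))) (p), (SS g p l).IsHomogeneous l.length := by
  intro l
  induction l with
  | nil => intro p; rw [SS_nil]; exact isHomogeneous_one _ _
  | cons j l ih =>
      intro p
      rw [SS_cons, List.length_cons]
      apply IsHomogeneous.add
      · split
        · exact isHomogeneous_zero _ _ _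
        · have := (isHomogeneous_X ℤ (Sum.inr j)).mul (ih none)
          simpa [Nat.add_comm] using this
      · have := (isHomogeneous_X ℤ (Sum.inl (j+1))).mul (ih (some j))
        simpa [Nat.add_comm] using this

lemma AAx_homog : ∀ (l : List (Fin (g+1))) (p), (AAx g p l).IsHomogeneous (l.length + 1) := by
  intro l
  induction l with
  | nil =>
      intro p
      rw [AAx_nil]
      split
      · exact isHomogeneous_zero _ _ _
      · exact isHomogeneous_X ℤ _
  | cons j l ih =>
      intro p
      rw [AAx_cons, List.length_cons]
      apply IsHomogeneous.add
      · split
        · exact isHomogeneous_zero _ _ _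
        · have := (isHomogeneous_X ℤ (Sum.inr j)).mul (ih none)
          simpa [Nat.add_comm] using this
      · have := (isHomogeneous_X ℤ (Sum.inl (j+1))).mul (ih (some j))
        simpa [Nat.add_comm] using this

lemma SS_zero_expand (l : List (Fin (g+1))) :
    SS g none ((0 : Fin (g+1)) :: l ++ [Fin.last g]) =
      X (Sum.inl 0) * X (Sum.inr 0) * SS g none l +
        (X (Sum.inr 0) * AAx g none l + X (Sum.inl 1) * AAx g (some 0) l +
          X (Sum.inl 0) * X (Sum.inl 1) * SS g (some 0) l) := by
  have h1 : (0 : Fin (g+1)) :: l ++ [Fin.last g] = 0 :: (l ++ [Fin.last g]) := rfl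
  rw [h1, SS_cons, pforce_none, if_neg (by simp), SS_append, SS_append, zero_add]
  ring

end

lemma isHomog_of_eq {g : ℕ} {q : MvPolynomial (Fin (g + 1) ⊕ Fin (g + 1)) ℤ} {n n' : ℕ}
    (h : q.IsHomogeneous n) (e : n = n') : q.IsHomogeneous n' := e ▸ h

/-- each conserved quantity `c_{g+1-k}` is a subtraction-free homogeneous
polynomial of degree `k`: every monomial in its support has nonnegative coefficient and
total degree exactly `k`. -/
theorem pdTLconserved_subtraction_free_homogeneous
    (g : ℕ) (hg : 1 ≤ g) (k : ℕ) (hk1 : 1 ≤ k) (hk2 : k ≤ g + 1) :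
    ∀ d ∈ (pdTLconserved g k).support,
      0 ≤ (pdTLconserved g k).coeff d ∧ (d.sum fun _ n => n) = k := by
  have main : (pdTLconserved g k).IsHomogeneous k ∧ NNc g (pdTLconserved g k) := by
    by_cases hk : k = 1
    · subst hk
      rw [pdTLconserved, if_pos rfl]
      constructor
      · exact IsHomogeneous.sum _ _ _ fun i _ => (isHomogeneous_X ℤ _).add (isHomogeneous_X ℤ _)
      · exact NNc_sum g _ _ fun i _ => NNc_add g (NNc_X g _) (NNc_X g _)
    · obtain ⟨m, rfl⟩ : ∃ m, k = m + 2 := ⟨k - 2, by omega⟩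
      rw [pdTLconserved, if_neg hk, Nat.add_sub_cancel]
      set τ : Fin (g+1) := Fin.last g with hτ
      have hτ0 : τ ≠ 0 := by
        rw [hτ, Ne, Fin.ext_iff, Fin.val_last, Fin.val_zero]
        omega
      -- list facts
      have hlist : ∀ Υ : Finset (Fin (g+1)), (∀ x ∈ Υ, 0 < (x:ℕ) ∧ (x:ℕ) < g) →
          (((0:Fin (g+1)) :: Υ.sort (·≤·) ++ [τ]).Pairwise (·<·) ∧
            ∀ x, x ∈ (0:Fin (g+1)) :: Υ.sort (·≤·) ++ [τ] ↔ x = 0 ∨ x ∈ Υ ∨ x = τ) := by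
        intro Υ hΥ
        have hmem' : ∀ x ∈ Υ.sort (·≤·), 0 < (x:ℕ) ∧ (x:ℕ) < g := fun x hx =>
          hΥ x ((Finset.mem_sort _).mp hx)
        refine ⟨?_, ?_⟩
        · rw [List.cons_append, List.pairwise_cons]
          constructor
          · intro b hb
            rcases List.mem_append.mp hb with hb | hb
            · have := hmem' b hb
              rw [Fin.lt_def, Fin.val_zero]
              omega
            · have hbτ : b = τ := by simpa using hb
              subst hbτ
              rw [Fin.lt_def, Fin.val_zero, hτ, Fin.val_last]
              omega
          · refine List.pairwise_append.2 ⟨(Finset.sortedLT_sort Υ).pairwise, List.pairwise_singleton _ _, ?_⟩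
            intro a ha b hb
            have hbτ : b = τ := by simpa using hb
            subst hbτ
            have := hmem' a ha
            rw [Fin.lt_def, hτ, Fin.val_last]
            omega
        · intro x
          simp only [List.mem_cons, List.mem_append, List.mem_singleton, Finset.mem_sort]
          tauto
      have hdet : ∀ Ω : Finset (Fin (g+1)),
          ((LLamX g).submatrix (fun p : Ω => (p : Fin (g+1))) (fun p : Ω => (p : Fin (g+1)))).det
            = SS g none (Ω.sort (·≤·)) := fun Ω =>
        det_subtype g Ω _ ((Finset.sortedLT_sort Ω).pairwise) fun x => Finset.mem_sort _
      -- split the first sum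
      rw [← Finset.sum_filter_add_sum_filter_not
        ((Finset.univ : Finset (Fin (g+1))).powersetCard (m+2))
        (fun Ω => (0:Fin (g+1)) ∈ Ω ∧ τ ∈ Ω)]
      -- identify the filtered part with the BBLam sum
      have hbij : ∑ Ω ∈ ((Finset.univ : Finset (Fin (g+1))).powersetCard (m+2)).filter
            (fun Ω => (0:Fin (g+1)) ∈ Ω ∧ τ ∈ Ω),
            ((LLamX g).submatrix (fun p : Ω => (p : Fin (g+1))) (fun p : Ω => (p : Fin (g+1)))).det
          = ∑ Υ ∈ (BBLam g).powersetCard m,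
              SS g none ((0:Fin (g+1)) :: Υ.sort (·≤·) ++ [τ]) := by
        refine Finset.sum_bij' (fun Ω _ => (Ω.erase 0).erase τ)
          (fun Υ _ => insert 0 (insert τ Υ)) ?_ ?_ ?_ ?_ ?_
        · -- maps into powersetCard m (BBLam g)
          intro Ω hΩ
          rw [Finset.mem_filter, Finset.mem_powersetCard] at hΩ
          obtain ⟨⟨hsub, hcard⟩, h0, hτm⟩ := hΩ
          rw [Finset.mem_powersetCard]
          constructor
          · intro x hx
            rw [Finset.mem_erase, Finset.mem_erase] at hx
            obtain ⟨hxτ, hx0, _⟩ := hx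
            have h1 : (x:ℕ) ≠ 0 := fun h => hx0 (Fin.ext (by simpa using h))
            have h2 : (x:ℕ) ≠ g := fun h => hxτ (Fin.ext (by simp [hτ, Fin.val_last, h]))
            have h3 : (x:ℕ) < g + 1 := x.isLt
            simp only [BBLam, Finset.mem_filter, Finset.mem_univ, true_and]
            omega
          · have hτe : τ ∈ Ω.erase 0 := Finset.mem_erase.mpr ⟨hτ0, hτm⟩
            rw [Finset.card_erase_of_mem hτe, Finset.card_erase_of_mem h0, hcard]
            omega
        · -- reverse map into the filter
          intro Υ hΥ
          rw [Finset.mem_powersetCard] at hΥ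
          obtain ⟨hsub, hcard⟩ := hΥ
          have hbd : ∀ x ∈ Υ, 0 < (x:ℕ) ∧ (x:ℕ) < g := by
            intro x hx
            have := hsub hx
            simp only [BBLam, Finset.mem_filter, Finset.mem_univ, true_and] at this
            omega
          have hτΥ : τ ∉ Υ := fun h => by
            have := hbd τ h
            rw [hτ, Fin.val_last] at this
            omega
          have h0Υ : (0:Fin (g+1)) ∉ insert τ Υ := by
            rw [Finset.mem_insert]
            rintro (h | h)
            · exact hτ0 h.symm
            · have := hbd 0 h
              simp at this
          rw [Finset.mem_filter, Finset.mem_powersetCard]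
          refine ⟨⟨fun x _ => Finset.mem_univ x, ?_⟩, ?_, ?_⟩
          · rw [Finset.card_insert_of_notMem h0Υ, Finset.card_insert_of_notMem hτΥ, hcard]
          · exact Finset.mem_insert_self _ _
          · exact Finset.mem_insert_of_mem (Finset.mem_insert_self _ _)
        · -- left inverse
          intro Ω hΩ
          rw [Finset.mem_filter] at hΩ
          obtain ⟨_, h0, hτm⟩ := hΩ
          have hτe : τ ∈ Ω.erase 0 := Finset.mem_erase.mpr ⟨hτ0, hτm⟩
          show insert 0 (insert τ ((Ω.erase 0).erase τ)) = Ω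
          rw [Finset.insert_erase hτe, Finset.insert_erase h0]
        · -- right inverse
          intro Υ hΥ
          rw [Finset.mem_powersetCard] at hΥ
          obtain ⟨hsub, hcard⟩ := hΥ
          have hbd : ∀ x ∈ Υ, 0 < (x:ℕ) ∧ (x:ℕ) < g := by
            intro x hx
            have := hsub hx
            simp only [BBLam, Finset.mem_filter, Finset.mem_univ, true_and] at this
            omega
          have hτΥ : τ ∉ Υ := fun h => by
            have := hbd τ h
            rw [hτ, Fin.val_last] at this
            omega
          have h0Υ : (0:Fin (g+1)) ∉ insert τ Υ := by
            rw [Finset.mem_insert]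
            rintro (h | h)
            · exact hτ0 h.symm
            · have := hbd 0 h
              simp at this
          show ((insert 0 (insert τ Υ)).erase 0).erase τ = Υ
          rw [Finset.erase_insert h0Υ, Finset.erase_insert hτΥ]
        · -- values agree
          intro Ω hΩ
          rw [Finset.mem_filter, Finset.mem_powersetCard] at hΩ
          obtain ⟨⟨hsub, hcard⟩, h0, hτm⟩ := hΩ
          have hbd : ∀ x ∈ (Ω.erase 0).erase τ, 0 < (x:ℕ) ∧ (x:ℕ) < g := by
            intro x hx
            rw [Finset.mem_erase, Finset.mem_erase] at hx
            obtain ⟨hxτ, hx0, _⟩ := hx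
            have h1 : (x:ℕ) ≠ 0 := fun h => hx0 (Fin.ext (by simpa using h))
            have h2 : (x:ℕ) ≠ g := fun h => hxτ (Fin.ext (by simp [hτ, Fin.val_last, h]))
            have h3 : (x:ℕ) < g + 1 := x.isLt
            omega
          obtain ⟨hsort, hmm⟩ := hlist _ hbd
          apply det_subtype g Ω _ hsort
          intro x
          rw [hmm x]
          constructor
          · rintro (rfl | hx | rfl)
            · exact h0
            · exact Finset.mem_of_mem_erase (Finset.mem_of_mem_erase hx)
            · exact hτm
          · intro hx
            by_cases hx0 : x = 0
            · exact Or.inl hx0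
            by_cases hxτ : x = τ
            · exact Or.inr (Or.inr hxτ)
            · exact Or.inr (Or.inl (by rw [Finset.mem_erase, Finset.mem_erase]; exact ⟨hxτ, hx0, hx⟩))
      rw [hbij]
      have hcongr : ∑ Ω ∈ ((Finset.univ : Finset (Fin (g+1))).powersetCard (m+2)).filter
            (fun Ω => ¬((0:Fin (g+1)) ∈ Ω ∧ τ ∈ Ω)),
            ((LLamX g).submatrix (fun p : Ω => (p : Fin (g+1))) (fun p : Ω => (p : Fin (g+1)))).det
          = ∑ Ω ∈ ((Finset.univ : Finset (Fin (g+1))).powersetCard (m+2)).filter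
            (fun Ω => ¬((0:Fin (g+1)) ∈ Ω ∧ τ ∈ Ω)), SS g none (Ω.sort (·≤·)) :=
        Finset.sum_congr rfl fun Ω _ => hdet Ω
      have hcongr2 : ∑ Υ ∈ (BBLam g).powersetCard m,
            ((LLamX g).submatrix (fun p : Υ => (p : Fin (g+1))) (fun p : Υ => (p : Fin (g+1)))).det
          = ∑ Υ ∈ (BBLam g).powersetCard m, SS g none (Υ.sort (·≤·)) :=
        Finset.sum_congr rfl fun Υ _ => hdet Υ
      rw [hcongr, hcongr2, Finset.mul_sum, add_comm
        (∑ Υ ∈ (BBLam g).powersetCard m, SS g none ((0:Fin (g+1)) :: Υ.sort (·≤·) ++ [τ])),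
        add_sub_assoc, ← Finset.sum_sub_distrib]
      -- now Good of each piece
      constructor
      · apply IsHomogeneous.add
        · apply IsHomogeneous.sum
          intro Ω hΩ
          rw [Finset.mem_filter, Finset.mem_powersetCard] at hΩ
          exact isHomog_of_eq (SS_homog g _ none) (by rw [Finset.length_sort, hΩ.1.2])
        · apply IsHomogeneous.sum
          intro Υ hΥ
          rw [Finset.mem_powersetCard] at hΥ
          have hlen : (Υ.sort (·≤·)).length = m := by rw [Finset.length_sort, hΥ.2]
          rw [SS_zero_expand, mul_assoc, add_sub_cancel_left]
          apply IsHomogeneous.add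
          apply IsHomogeneous.add
          · exact isHomog_of_eq ((isHomogeneous_X ℤ _).mul (AAx_homog g _ none))
              (by rw [hlen]; omega)
          · exact isHomog_of_eq ((isHomogeneous_X ℤ _).mul (AAx_homog g _ (some 0)))
              (by rw [hlen]; omega)
          · exact isHomog_of_eq (((isHomogeneous_X ℤ _).mul (isHomogeneous_X ℤ _)).mul
              (SS_homog g _ (some 0))) (by rw [hlen]; omega)
      · apply NNc_add
        · exact NNc_sum g _ _ fun Ω _ => NNc_SS g _ none
        · apply NNc_sum
          intro Υ hΥ
          rw [SS_zero_expand, mul_assoc, add_sub_cancel_left]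
          exact NNc_add g (NNc_add g (NNc_mul g (NNc_X g _) (NNc_AAx g _ none))
            (NNc_mul g (NNc_X g _) (NNc_AAx g _ (some 0))))
            (NNc_mul g (NNc_mul g (NNc_X g _) (NNc_X g _)) (NNc_SS g _ (some 0)))
  intro d hd
  refine ⟨main.2 d, ?_⟩
  have h := main.1 (MvPolynomial.mem_support_iff.mp hd)
  rw [← h, Finsupp.weight_apply]
  simp [Finsupp.sum]
end
end

section
/- For the periodic discrete Toda lattice conserved quantity with $k = g+1$: $c_0 = \prod_{i=1}^{g+1} I_i + \prod_{j=1}^{g+1} V_j$. -/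
open Finset Matrix

section ToFa

variable {R : Type*} [CommRing R]

/-- general tridiagonal matrix with superdiagonal 1. -/
def trid (n : ℕ) (d s : ℕ → R) : Matrix (Fin n) (Fin n) R :=
  Matrix.of fun i j =>
    if (i : ℕ) = (j : ℕ) then d i
    else if (i : ℕ) + 1 = (j : ℕ) then 1
    else if (i : ℕ) = (j : ℕ) + 1 then s i
    else 0

lemma trid_rec (n : ℕ) (d s : ℕ → R) :
    (trid (n + 2) d s).det =
      d 0 * (trid (n + 1) (fun i => d (i + 1)) (fun i => s (i + 1))).det -
      s 1 * (trid n (fun i => d (i + 2)) (fun i => s (i + 2))).det := by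
  rw [det_succ_row_zero, Fin.sum_univ_succ, Fin.sum_univ_succ]
  have h0 : ∀ j : Fin n, (trid (n+2) d s) 0 j.succ.succ = 0 := by
    intro j
    simp only [trid, of_apply, Fin.val_succ, Fin.val_zero]
    split_ifs <;> first | rfl | omega | tauto
  rw [Finset.sum_eq_zero (fun j _ => by rw [h0]; ring)]
  have e00 : (trid (n+2) d s) 0 0 = d 0 := by simp [trid]
  have e01 : (trid (n+2) d s) 0 (Fin.succ 0) = 1 := by
    simp only [trid, of_apply, Fin.val_zero, Fin.val_succ]
    norm_num
  have hsub : (trid (n+2) d s).submatrix Fin.succ Fin.succ =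
      trid (n + 1) (fun i => d (i + 1)) (fun i => s (i + 1)) := by
    ext i j
    simp only [trid, submatrix_apply, of_apply, Fin.val_succ]
    split_ifs <;> first | rfl | omega | tauto
  have hB : ((trid (n+2) d s).submatrix Fin.succ ((Fin.succ 0).succAbove)).det =
      s 1 * (trid n (fun i => d (i + 2)) (fun i => s (i + 2))).det := by
    have h2 : ((Fin.succ (0 : Fin (n+1))).succAbove 0) = 0 := by
      rw [Fin.succAbove_of_castSucc_lt]
      · rfl
      · rw [Fin.lt_def]; simp
    rw [det_succ_column_zero, Fin.sum_univ_succ]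
    have h1 : ∀ i : Fin n,
        ((trid (n+2) d s).submatrix Fin.succ ((Fin.succ 0).succAbove)) i.succ 0 = 0 := by
      intro i
      simp only [submatrix_apply, h2, trid, of_apply, Fin.val_succ, Fin.val_zero]
      split_ifs <;> first | rfl | omega | tauto
    rw [Finset.sum_eq_zero (fun i _ => by rw [h1]; ring)]
    have h3 : ((trid (n+2) d s).submatrix Fin.succ ((Fin.succ 0).succAbove)) 0 0 = s 1 := by
      simp only [submatrix_apply, h2, trid, of_apply, Fin.val_succ, Fin.val_zero]
      norm_num
    have h4 : (((trid (n+2) d s).submatrix Fin.succ ((Fin.succ 0).succAbove)).submatrix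
        ((0 : Fin (n+1)).succAbove) Fin.succ) =
        trid n (fun i => d (i + 2)) (fun i => s (i + 2)) := by
      ext i j
      have h5 : ((Fin.succ (0 : Fin (n+1))).succAbove j.succ) = j.succ.succ := by
        rw [Fin.succAbove_of_le_castSucc]
        rw [Fin.le_def]
        simp
      simp only [submatrix_apply, Fin.succAbove_zero, h5, trid, of_apply, Fin.val_succ]
      split_ifs <;> first | rfl | omega | tauto
    rw [h3, h4]
    simp
  rw [e00, e01, hB, Fin.succAbove_zero, hsub]
  simp only [Fin.val_zero, Fin.val_succ, pow_zero, pow_one, zero_add, pow_succ]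
  ring

/-- Toda tridiagonal matrix. -/
def tridIV (n : ℕ) (I V : ℕ → R) : Matrix (Fin n) (Fin n) R :=
  trid n (fun k => I (k + 1) + V k) (fun k => I k * V k)

/-- closed form sum. -/
def Ssum (n : ℕ) (I V : ℕ → R) : R :=
  ∑ k ∈ Finset.range (n + 1), (∏ i ∈ Finset.Ico (k + 1) (n + 1), I i) * ∏ i ∈ Finset.range k, V i

lemma Ico_shift (a b : ℕ) (f : ℕ → R) :
    ∏ i ∈ Finset.Ico a b, f (i + 1) = ∏ i ∈ Finset.Ico (a + 1) (b + 1), f i := by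
  rw [Finset.prod_Ico_eq_prod_range, Finset.prod_Ico_eq_prod_range]
  have : b + 1 - (a + 1) = b - a := by omega
  rw [this]
  exact Finset.prod_congr rfl fun i _ => by ring_nf

lemma Ssum_rec (n : ℕ) (I V : ℕ → R) :
    Ssum (n + 1) I V =
      (∏ i ∈ Finset.Ico 1 (n + 2), I i) +
        V 0 * Ssum n (fun i => I (i + 1)) (fun i => V (i + 1)) := by
  unfold Ssum
  rw [Finset.sum_range_succ']
  simp only [Finset.range_zero, Finset.prod_empty, mul_one, zero_add]
  rw [add_comm]
  congr 1
  rw [Finset.mul_sum]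
  refine Finset.sum_congr rfl fun k _ => ?_
  rw [Ico_shift, Finset.prod_range_succ']
  ring

lemma tridIV_det (n : ℕ) : ∀ (I V : ℕ → R),
    (tridIV (n + 1) I V).det =
      (∏ i ∈ Finset.Ico 1 (n + 2), I i) +
        V 0 * (tridIV n (fun i => I (i + 1)) (fun i => V (i + 1))).det := by
  induction n with
  | zero =>
    intro I V
    rw [show (tridIV 1 I V).det = I 1 + V 0 from det_fin_one _]
    simp [det_fin_zero]
  | succ m ih =>
    intro I V
    have hrec := trid_rec m (fun k => I (k + 1) + V k) (fun k => I k * V k)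
    have h1 : (tridIV (m + 2) I V).det =
        (I 1 + V 0) * (tridIV (m + 1) (fun i => I (i + 1)) (fun i => V (i + 1))).det -
          I 1 * V 1 * (tridIV m (fun i => I (i + 2)) (fun i => V (i + 2))).det := hrec
    rw [h1, ih (fun i => I (i + 1)) (fun i => V (i + 1))]
    have h2 : (∏ i ∈ Finset.Ico 1 (m + 2), (fun i => I (i + 1)) i) =
        ∏ i ∈ Finset.Ico 2 (m + 3), I i := Ico_shift 1 (m + 2) I
    rw [h2]
    have h3 : (∏ i ∈ Finset.Ico 1 (m + 3), I i) = I 1 * ∏ i ∈ Finset.Ico 2 (m + 3), I i :=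
      Finset.prod_eq_prod_Ico_succ_bot (by omega) I
    rw [h3]
    ring

lemma tridIV_det_eq_Ssum (n : ℕ) : ∀ (I V : ℕ → R),
    (tridIV n I V).det = Ssum n I V := by
  induction n with
  | zero =>
    intro I V
    simp [Ssum, det_fin_zero]
  | succ m ih =>
    intro I V
    rw [tridIV_det, ih, Ssum_rec]

lemma Ssum_key (n : ℕ) (J W : ℕ → R) (hJ : J (n + 2) = J 0) :
    Ssum (n + 2) J W =
      J 0 * W 0 * Ssum n (fun i => J (i + 1)) (fun i => W (i + 1)) +
        (∏ i ∈ Finset.range (n + 2), J i) + ∏ i ∈ Finset.range (n + 2), W i := by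
  unfold Ssum
  rw [Finset.sum_range_succ, Finset.sum_range_succ']
  simp only [Finset.Ico_self, Finset.prod_empty, one_mul, Finset.range_zero, mul_one, zero_add]
  have hmid : ∀ k ∈ Finset.range (n + 1),
      (∏ i ∈ Finset.Ico (k + 1 + 1) (n + 2 + 1), J i) * ∏ i ∈ Finset.range (k + 1), W i =
      J 0 * W 0 * ((∏ i ∈ Finset.Ico (k + 1) (n + 1), (fun i => J (i + 1)) i) *
        ∏ i ∈ Finset.range k, (fun i => W (i + 1)) i) := by
    intro k hk
    rw [Finset.mem_range] at hk
    rw [Ico_shift, Finset.prod_range_succ', Finset.prod_Ico_succ_top (by omega) J, hJ]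
    ring
  rw [Finset.sum_congr rfl hmid, ← Finset.mul_sum]
  have hbot : ∏ i ∈ Finset.range (n + 2), J i = J 0 * ∏ i ∈ Finset.Ico 1 (n + 2), J i := by
    rw [Finset.range_eq_Ico]
    exact Finset.prod_eq_prod_Ico_succ_bot (by omega) J
  have hJprod : (∏ i ∈ Finset.Ico 1 (n + 2 + 1), J i) = ∏ i ∈ Finset.range (n + 2), J i := by
    rw [Finset.prod_Ico_succ_top (by omega) J, hJ, hbot]
    ring
  rw [hJprod]

end ToFa

open Fin.NatCast in
/-- the conserved quantity `c_0 = det L_Λ - I_1 V_1 det L_{\bar{\bar Λ}}`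
equals `∏ I_i + ∏ V_j`.  Here `L_{\bar{\bar Λ}}` is the principal submatrix on the
index set `{2,…,g}` (1-based), i.e. `{1,…,g-1}` (0-based), realized via `Fin (g-1)`. -/
theorem pdTL_c0_eq
    (g : ℕ) (hg : 1 ≤ g) {R : Type*} [CommRing R] (I V : Fin (g + 1) → R) :
    (LLam g I V).det -
      I 0 * V 0 *
        (Matrix.of fun a b : Fin (g - 1) =>
          LLam g I V ((((a : ℕ) + 1 : ℕ)) : Fin (g + 1)) ((((b : ℕ) + 1 : ℕ)) : Fin (g + 1))).det =
      (∏ i, I i) + (∏ i, V i) := by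
  obtain ⟨n, rfl⟩ : ∃ n, g = n + 1 := ⟨g - 1, by omega⟩
  set Inat : ℕ → R := fun i => I ((i : ℕ) : Fin (n + 2)) with hInat
  set Vnat : ℕ → R := fun i => V ((i : ℕ) : Fin (n + 2)) with hVnat
  have hL : LLam (n + 1) I V = tridIV (n + 2) Inat Vnat := by
    ext i j
    simp only [LLam, tridIV, trid, of_apply, hInat, hVnat, Nat.cast_add, Nat.cast_one,
      Fin.cast_val_eq_self]
  have hM : (Matrix.of fun a b : Fin (n + 1 - 1) =>
        LLam (n + 1) I V ((((a : ℕ) + 1 : ℕ)) : Fin (n + 1 + 1))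
          ((((b : ℕ) + 1 : ℕ)) : Fin (n + 1 + 1))) =
      tridIV n (fun i => Inat (i + 1)) (fun i => Vnat (i + 1)) := by
    ext a b
    have ha : ((((a : ℕ) + 1 : ℕ)) : Fin (n + 2)).val = (a : ℕ) + 1 :=
      Fin.val_cast_of_lt (by have := a.isLt; omega)
    have hb : ((((b : ℕ) + 1 : ℕ)) : Fin (n + 2)).val = (b : ℕ) + 1 :=
      Fin.val_cast_of_lt (by have := b.isLt; omega)
    simp only [LLam, tridIV, trid, of_apply, ha, hb, hInat, hVnat]
    split_ifs <;> first
      | rfl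
      | omega
      | (push_cast [Fin.cast_val_eq_self]; ring_nf)
  rw [hM, hL, tridIV_det_eq_Ssum, tridIV_det_eq_Ssum]
  have hwrap : Inat (n + 2) = Inat 0 := by
    simp [hInat, Fin.natCast_self]
  rw [Ssum_key n Inat Vnat hwrap]
  have hIp : ∏ i ∈ Finset.range (n + 2), Inat i = ∏ i : Fin (n + 2), I i := by
    rw [← Fin.prod_univ_eq_prod_range (fun i => Inat i) (n + 2)]
    exact Fintype.prod_congr _ _ fun i => by simp [hInat, Fin.cast_val_eq_self]
  have hVp : ∏ i ∈ Finset.range (n + 2), Vnat i = ∏ i : Fin (n + 2), V i := by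
    rw [← Fin.prod_univ_eq_prod_range (fun i => Vnat i) (n + 2)]
    exact Fintype.prod_congr _ _ fun i => by simp [hVnat, Fin.cast_val_eq_self]
  have hI0 : Inat 0 = I 0 := by simp [hInat]
  have hV0 : Vnat 0 = V 0 := by simp [hVnat]
  rw [hIp, hVp, hI0, hV0]
  ring
end

section
/- For $g=1$, the point $\bar P_1 = (-I_1 - V_1,\ I_1V_2 - I_2V_1)$ lies on the curve $\kappa_2$ given by $h_2(u,v) = I_1I_2 + V_1V_2 + 2I_2V_1 + u^2 + c_1 u + v = 0$ (with $c_1 = I_1+I_2+V_1+V_2$), and on the spectral curve $\gamma: v^2 = (u^2+c_1u+c_0)^2 - 4c_{-1}$. Moreover, if $\bar I_1, \bar I_2, \bar V_1, \bar V_2$ satisfy the pdTL equations $\bar I_i + \bar V_{i-1} = I_i + V_i$, $\bar V_i \bar I_i = I_{i+1}V_i$ (indices mod 2), then $\bar P_1 = (-\bar I_1 - \bar V_2,\ \bar I_2 \bar V_2 - \bar I_1 \bar V_1)$. -/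
/-- for `g = 1`, the point `P̄₁ = (-I₁-V₁, I₁V₂ - I₂V₁)` lies on the curve
`κ₂` and on the spectral curve `γ`; moreover, if `Ī, V̄` satisfy the pdTL equations then
`P̄₁ = (-Ī₁-V̄₂, Ī₂V̄₂ - Ī₁V̄₁)`. -/
theorem g1_Pbar1_on_kappa2_gamma_and_image (I1 I2 V1 V2 : ℝ)
    (hI1 : 0 < I1) (hI2 : 0 < I2) (hV1 : 0 < V1) (hV2 : 0 < V2)
    (hlt : V1 * V2 < I1 * I2) :
    (I1 * I2 + V1 * V2 + 2 * I2 * V1 + (-I1 - V1) ^ 2 +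
        (I1 + I2 + V1 + V2) * (-I1 - V1) + (I1 * V2 - I2 * V1) = 0) ∧
    ((I1 * V2 - I2 * V1) ^ 2 =
      ((-I1 - V1) ^ 2 + (I1 + I2 + V1 + V2) * (-I1 - V1) + (I1 * I2 + V1 * V2)) ^ 2 -
        4 * (I1 * I2 * V1 * V2)) ∧
    (∀ Ibar1 Ibar2 Vbar1 Vbar2 : ℝ,
      Ibar1 + Vbar2 = I1 + V1 → Ibar2 + Vbar1 = I2 + V2 →
      Vbar1 * Ibar1 = I2 * V1 → Vbar2 * Ibar2 = I1 * V2 →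
      (-I1 - V1, I1 * V2 - I2 * V1) =
        (-Ibar1 - Vbar2, Ibar2 * Vbar2 - Ibar1 * Vbar1)) := by
  refine ⟨by ring, by ring, ?_⟩
  intro a b c d h1 h2 h3 h4
  have : -I1 - V1 = -a - d := by linarith
  have : I1 * V2 - I2 * V1 = b * d - a * c := by
    rw [← h3, ← h4]; ring
  simp_all
end

section
/- Let $F(X,Y) = \min\big(2Y,\ Y + \min((g+1)X, C_g+gX, \ldots, C_1+X, C_0),\ C_{-1}\big)$ be the tropical polynomial defining the spectral curve of the pBBS, with the genericity assumptions $C_{-1} > 2C_0$, $C_{g-1} > 2C_g$, and $C_i + C_{i+2} > 2C_{i+1}$ for $i = 0,\ldots,g-2$. Then for each $i = 0, 1,\ldots, g$, the point $V_i = (C_{g-i}-C_{g-i+1},\ C_{-1} - (g-i+1)C_{g-i} + (g-i)C_{g-i+1})$ (with the convention $C_{g+1} = 0$) is a point at which $F$ is not differentiable, i.e., a point of the tropical curve $\tilde\Gamma$. -/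
open Finset Filter Set Topology

/-- The tropical polynomial `F` defining the spectral curve of the pBBS, with the
convention `C (g+1) = 0` (so the inner min ranges over `C_i + iX` for `i = 0,…,g+1`). -/
noncomputable def Ftrop (g : ℕ) (Cm1 : ℝ) (C : ℕ → ℝ) : ℝ × ℝ → ℝ :=
  fun p =>
    min (min (2 * p.2)
      (p.2 + (Finset.range (g + 2)).inf'
        (Finset.nonempty_range_iff.mpr (by omega)) (fun k => C k + k * p.1))) Cm1

private lemma anti_aux (g : ℕ) (C : ℕ → ℝ)
    (hCtop : C (g + 1) = 0)
    (h2 : C (g - 1) > 2 * C g)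
    (h3 : ∀ i, i + 2 ≤ g → C i + C (i + 2) > 2 * C (i + 1)) :
    ∀ k m, k ≤ m → m ≤ g → C m - C (m + 1) ≤ C k - C (k + 1) := by
  have step : ∀ k, k < g → C (k + 1) - C (k + 2) ≤ C k - C (k + 1) := by
    intro k hk
    rcases lt_or_ge (k + 2) (g + 1) with h | h
    · have := h3 k (by omega); linarith
    · have e1 : C (g - 1) = C k := by congr 1; omega
      have e2 : C (k + 2) = C (g + 1) := by congr 1; omega
      have e3 : C g = C (k + 1) := by congr 1; omega
      rw [e1, e3] at h2
      rw [e2, hCtop]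
      linarith
  intro k m hkm
  induction m, hkm using Nat.le_induction with
  | base => intro _; exact le_refl _
  | succ m hm ih =>
    intro hmg
    exact le_trans (step m (by omega)) (ih (by omega))

/-- under the genericity assumptions, each vertex
`V_i = (C_{g-i} - C_{g-i+1}, C₋₁ - (g-i+1) C_{g-i} + (g-i) C_{g-i+1})` is a point of
non-differentiability of `F`, i.e. a point of the tropical curve. -/
theorem vertices_on_tropical_spectral_curve
    (g : ℕ) (Cm1 : ℝ) (C : ℕ → ℝ)
    (hCtop : C (g + 1) = 0)
    (h1 : Cm1 > 2 * C 0)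
    (h2 : C (g - 1) > 2 * C g)
    (h3 : ∀ i, i + 2 ≤ g → C i + C (i + 2) > 2 * C (i + 1)) :
    ∀ i ≤ g,
      ¬ DifferentiableAt ℝ (Ftrop g Cm1 C)
        (C (g - i) - C (g - i + 1),
          Cm1 - (g - i + 1 : ℕ) * C (g - i) + (g - i : ℕ) * C (g - i + 1)) := by
  intro i hi
  set j := g - i with hjdef
  have hjg : j ≤ g := by omega
  set x0 : ℝ := C j - C (j + 1) with hx0
  set y0 : ℝ := Cm1 - (j + 1 : ℕ) * C j + (j : ℕ) * C (j + 1) with hy0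
  have anti := anti_aux g C hCtop h2 h3
  -- the inner min is attained at j (and at j+1)
  have claim_up : ∀ k, j ≤ k → k ≤ g + 1 → C j + (j : ℝ) * x0 ≤ C k + (k : ℝ) * x0 := by
    intro k hjk
    induction k, hjk using Nat.le_induction with
    | base => intro _; exact le_refl _
    | succ k hk ih =>
      intro hk1
      have h4 := ih (by omega)
      have h5 : C k - C (k + 1) ≤ x0 := by
        rw [hx0]; exact anti j k hk (by omega)
      have : C k + (k : ℝ) * x0 ≤ C (k + 1) + ((k + 1 : ℕ) : ℝ) * x0 := by
        push_cast; linarith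
      linarith
  have claim_down : ∀ d k, k + d = j → C j + (j : ℝ) * x0 ≤ C k + (k : ℝ) * x0 := by
    intro d
    induction d with
    | zero =>
      intro k hk
      have : k = j := by omega
      subst this; exact le_refl _
    | succ d ih =>
      intro k hk
      have h4 := ih (k + 1) (by omega)
      have h5 : x0 ≤ C k - C (k + 1) := by
        rw [hx0]; exact anti k j (by omega) hjg
      have : C (k + 1) + ((k + 1 : ℕ) : ℝ) * x0 ≤ C k + (k : ℝ) * x0 := by
        push_cast; linarith
      linarith
  have claim_all : ∀ k, k ≤ g + 1 → C j + (j : ℝ) * x0 ≤ C k + (k : ℝ) * x0 := by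
    intro k hk
    rcases le_or_gt j k with h | h
    · exact claim_up k h hk
    · exact claim_down (j - k) k (by omega)
  have heq : y0 + (C j + (j : ℝ) * x0) = Cm1 := by
    rw [hy0, hx0]; push_cast; ring
  have heq2 : y0 + (C (j + 1) + ((j + 1 : ℕ) : ℝ) * x0) = Cm1 := by
    rw [hy0, hx0]; push_cast; ring
  -- value at the vertex
  have hFP : Ftrop g Cm1 C (x0, y0) = Cm1 := by
    apply le_antisymm (min_le_right _ _)
    refine le_min (le_min ?_ ?_) le_rfl
    · -- Cm1 ≤ 2 * y0
      have h00 := claim_down j 0 (by omega)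
      have e : (2 : ℝ) * y0 = 2 * Cm1 - 2 * (C j + (j : ℝ) * x0) := by
        rw [hy0]; push_cast; ring
      push_cast at h00
      simp only [Ftrop]
      linarith
    · -- Cm1 ≤ y0 + inf'
      simp only [Ftrop]
      have hinf : Cm1 - y0 ≤ (Finset.range (g + 2)).inf'
          (Finset.nonempty_range_iff.mpr (by omega)) (fun k => C k + (k : ℝ) * x0) := by
        apply Finset.le_inf'
        intro k hk
        have hk' : k ≤ g + 1 := by
          have := Finset.mem_range.mp hk; omega
        have := claim_all k hk'
        linarith
      linarith
  -- upper bound along the horizontal line through the vertex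
  have hub : ∀ t : ℝ, Ftrop g Cm1 C (x0 + t, y0) ≤ Cm1 + ((j : ℝ) + 1) * t := by
    intro t
    have hmem : j + 1 ∈ Finset.range (g + 2) := Finset.mem_range.mpr (by omega)
    have h1' : Ftrop g Cm1 C (x0 + t, y0) ≤
        y0 + (C (j + 1) + ((j + 1 : ℕ) : ℝ) * (x0 + t)) := by
      refine le_trans (min_le_left _ _) (le_trans (min_le_right _ _) ?_)
      exact add_le_add le_rfl (Finset.inf'_le _ hmem)
    have e : y0 + (C (j + 1) + ((j + 1 : ℕ) : ℝ) * (x0 + t)) = Cm1 + ((j : ℝ) + 1) * t := by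
      rw [hy0, hx0]; push_cast; ring
    linarith
  have hub1 : ∀ p : ℝ × ℝ, Ftrop g Cm1 C p ≤ Cm1 := fun p => min_le_right _ _
  -- conclude non-differentiability
  intro hd
  have hφ : DifferentiableAt ℝ (fun t : ℝ => ((x0 + t, y0) : ℝ × ℝ)) 0 :=
    DifferentiableAt.prodMk ((differentiableAt_const x0).add differentiableAt_id)
      (differentiableAt_const y0)
  have hd' : DifferentiableAt ℝ (Ftrop g Cm1 C) ((fun t : ℝ => ((x0 + t, y0) : ℝ × ℝ)) 0) := by
    simpa using hd
  have hcomp : DifferentiableAt ℝ (Ftrop g Cm1 C ∘ fun t : ℝ => ((x0 + t, y0) : ℝ × ℝ)) 0 :=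
    hd'.comp 0 hφ
  set f : ℝ → ℝ := Ftrop g Cm1 C ∘ fun t : ℝ => ((x0 + t, y0) : ℝ × ℝ) with hfdef
  have hder : HasDerivAt f (deriv f 0) 0 := hcomp.hasDerivAt
  rw [hasDerivAt_iff_tendsto_slope] at hder
  set d : ℝ := deriv f 0
  have hf0 : f 0 = Cm1 := by
    show Ftrop g Cm1 C (x0 + 0, y0) = Cm1
    rw [add_zero]; exact hFP
  have hft : ∀ t : ℝ, f t = Ftrop g Cm1 C (x0 + t, y0) := fun t => rfl
  have hne1 : Tendsto (slope f 0) (𝓝[<] 0) (𝓝 d) :=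
    hder.mono_left (nhdsWithin_mono 0 fun x hx => ne_of_lt hx)
  have hne2 : Tendsto (slope f 0) (𝓝[>] 0) (𝓝 d) :=
    hder.mono_left (nhdsWithin_mono 0 fun x hx => ne_of_gt hx)
  have hd1 : 1 ≤ d := by
    refine ge_of_tendsto hne1 ?_
    filter_upwards [self_mem_nhdsWithin] with t ht
    have ht' : t < 0 := ht
    have hjt : ((j : ℝ) + 1) * t ≤ t := by
      nlinarith [Nat.cast_nonneg (α := ℝ) j]
    have hcv : f t ≤ Cm1 + t := by
      rw [hft]; linarith [hub t]
    rw [slope_def_field]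
    rw [le_div_iff_of_neg (by linarith : t - (0:ℝ) < 0)]
    linarith
  have hd0 : d ≤ 0 := by
    refine le_of_tendsto hne2 ?_
    filter_upwards [self_mem_nhdsWithin] with t ht
    have ht' : (0:ℝ) < t := ht
    have hcv : f t ≤ Cm1 := by rw [hft]; exact hub1 _
    rw [slope_def_field]
    apply div_nonpos_of_nonpos_of_nonneg
    · linarith
    · linarith
  linarith
end
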